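/- Let F be a nonprincipal filter on ω and p̂ = (p_n) a sequence in (0,1/2]. If there exists X ∈ F and k ∈ ω such that Σ_{n∈X} p_n^k < ∞, then μ_p̂(F) = 0. -/

import Mathlib

open MeasureTheory Filter Set
open scoped ENNReal

/-- `μ` is the product (Bernoulli) measure on `Bool^ι` determined by the sequence `p`:
a probability measure giving each cylinder set its natural product value. -/
def IsBernoulli {ι : Type*} (μ : Measure (ι → Bool)) (p : ι → ℝ≥0∞) : Prop :=
  IsProbabilityMeasure μ ∧
    ∀ (s : Finset ι) (f : ι → Bool),
      μ {x | ∀ i ∈ s, x i = f i} = ∏ i ∈ s, (if f i then p i else 1 - p i)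

/-- The subset of `2^ω` corresponding to a filter on `ω`, via characteristic functions. -/
def filterSet (F : Filter ℕ) : Set (ℕ → Bool) := {x | {n | x n = true} ∈ F}


theorem null_of_summable_pow (μ : Measure (ℕ → Bool)) (p : ℕ → ℝ≥0∞)
    (hp : ∀ n, 0 < p n ∧ p n ≤ 1 / 2) (hμ : IsBernoulli μ p)
    (F : Filter ℕ) [F.NeBot] (hF : F ≤ Filter.cofinite)
    (hX : ∃ X ∈ F, ∃ k : ℕ, ∑' n : X, p n ^ k ≠ ⊤) :
    μ (filterSet F) = 0 := by
  haveI : IsProbabilityMeasure μ := hμ.1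
  obtain ⟨X, hXF, k, hk⟩ := hX
  -- every member of F is infinite
  have hinf : ∀ A ∈ F, A.Infinite := by
    intro A hA
    by_contra hfin
    rw [Set.not_infinite] at hfin
    have : Aᶜ ∈ F := hF (by simpa [Filter.mem_cofinite] using hfin)
    have : (∅ : Set ℕ) ∈ F := by
      have := F.inter_mem hA this
      simpa using this
    exact (Filter.empty_notMem F) this
  -- k ≠ 0
  have hk0 : k ≠ 0 := by
    rintro rfl
    haveI : Infinite X := (hinf X hXF).to_subtype
    simp only [pow_zero] at hk
    exact hk (ENNReal.tsum_const_eq_top_of_ne_zero one_ne_zero)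
  -- single coordinate probability
  have hcoord : ∀ n, μ {x | x n = true} = p n := by
    intro n
    have := hμ.2 {n} (fun _ => true)
    simpa using this
  -- the product space
  set π : Measure (Fin k → (ℕ → Bool)) := Measure.pi (fun _ => μ) with hπ
  set E : ℕ → Set (Fin k → (ℕ → Bool)) :=
    fun n => {ω | n ∈ X ∧ ∀ i, ω i n = true} with hE
  have hEmeas : ∀ n, π (E n) = X.indicator (fun n => p n ^ k) n := by
    intro n
    by_cases hn : n ∈ X
    · have : E n = Set.pi Set.univ (fun _ : Fin k => {x : ℕ → Bool | x n = true}) := by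
        ext ω; simp [hE, hn]
      rw [this, Measure.pi_pi]
      simp [hcoord, Set.indicator_of_mem hn]
    · simp [hE, hn, Set.indicator_of_notMem hn]
  have hsum : ∑' n, π (E n) ≠ ⊤ := by
    rw [tsum_congr hEmeas, ← tsum_subtype]
    exact hk
  have hlim : π (limsup E atTop) = 0 := measure_limsup_atTop_eq_zero hsum
  -- the rectangle is inside limsup
  have hsub : Set.pi Set.univ (fun _ : Fin k => filterSet F) ⊆ limsup E atTop := by
    intro ω hω
    rw [mem_limsup_iff_frequently_mem, Nat.frequently_atTop_iff_infinite]
    have hmem : (⋂ i, {n | ω i n = true}) ∩ X ∈ F := by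
      refine F.inter_mem ?_ hXF
      exact Filter.iInter_mem.2 fun i => hω i (Set.mem_univ i)
    refine (hinf _ hmem).mono ?_
    rintro n ⟨hn1, hn2⟩
    simp only [Set.mem_iInter, Set.mem_setOf_eq] at hn1
    exact ⟨hn2, hn1⟩
  have hrect : (μ (filterSet F)) ^ k = π (Set.pi Set.univ (fun _ : Fin k => filterSet F)) := by
    rw [hπ, Measure.pi_pi]
    simp
  have : (μ (filterSet F)) ^ k = 0 :=
    le_antisymm (hrect ▸ hrect.le.trans ((measure_mono hsub).trans hlim.le)) (zero_le)
  exact pow_eq_zero_iff hk0 |>.mp this
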